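/- Let G be a bivalent-dense graph (meaning a strict majority of the neighbors of each non-bivalent vertex are bivalent, where bivalent means degree two), and let I be the subgraph of G induced by the set of edges incident to at least one bivalent vertex. If I has p connected components, then LO_k(G) = k^p. -/
import Mathlib

/-- A locally-optimal `k`-coloring: each vertex's own color appears strictly
more often among its neighbors than any other color (plurality). -/
def IsLocOpt {V : Type*} {k : ℕ} (G : SimpleGraph V) (c : V → Fin k) : Prop :=
  ∀ v : V, ∀ d : Fin k, d ≠ c v →
    Nat.card {w : V // G.Adj v w ∧ c w = d} < Nat.card {w : V // G.Adj v w ∧ c w = c v}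

/-- The number of locally-optimal `k`-colorings of `G`. -/
noncomputable def LOcount {V : Type*} (G : SimpleGraph V) (k : ℕ) : ℕ :=
  Nat.card {c : V → Fin k // IsLocOpt G c}

/-- The degree of a vertex, as the number of its neighbors. -/
noncomputable def deg {V : Type*} (G : SimpleGraph V) (v : V) : ℕ :=
  Nat.card {w : V // G.Adj v w}

open Finset in
lemma card_subtype_filter {V : Type*} [Fintype V] (P : V → Prop) [DecidablePred P] :
    Nat.card {w : V // P w} = (Finset.univ.filter P).card := by
  classical
  rw [Nat.card_eq_fintype_card, Fintype.card_subtype]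

open Finset in
/-- In a locally optimal coloring, every neighbor of a bivalent vertex shares its color. -/
lemma locopt_nbr_eq {V : Type*} [Fintype V] {k : ℕ} {G : SimpleGraph V} {c : V → Fin k}
    (hc : IsLocOpt G c) {v w : V} (hv : deg G v = 2) (hadj : G.Adj v w) : c w = c v := by
  classical
  by_contra h
  have h1 := hc v (c w) h
  rw [card_subtype_filter, card_subtype_filter] at h1
  set Sd := Finset.univ.filter (fun x => G.Adj v x ∧ c x = c w) with hSd
  set Sc := Finset.univ.filter (fun x => G.Adj v x ∧ c x = c v) with hSc
  have hw : w ∈ Sd := by simp [hSd, hadj]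
  have h2 : 1 ≤ Sd.card := Finset.card_pos.mpr ⟨w, hw⟩
  have h3 : 2 ≤ Sc.card := by omega
  have hdisj : Disjoint Sd Sc := by
    rw [Finset.disjoint_left]
    intro x hx hx'
    simp only [hSd, hSc, Finset.mem_filter] at hx hx'
    exact h (hx.2.2 ▸ hx'.2.2)
  have hsub : Sd ∪ Sc ⊆ Finset.univ.filter (fun x => G.Adj v x) := by
    intro x hx
    rcases Finset.mem_union.mp hx with hx | hx <;>
      simp only [hSd, hSc, Finset.mem_filter] at hx <;> simp [hx.2.1]
  have hdeg : (Finset.univ.filter (fun x => G.Adj v x)).card = 2 := by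
    rw [← card_subtype_filter]; exact hv
  have := Finset.card_le_card hsub
  rw [Finset.card_union_of_disjoint hdisj, hdeg] at this
  omega

open Finset in
/-- The key characterization: local optimality is equivalent to being constant
on the edges of `I`. -/
lemma locopt_iff {V : Type*} [Fintype V] {k : ℕ} (G : SimpleGraph V)
    (hdense : ∀ v : V, deg G v ≠ 2 →
      deg G v < 2 * Nat.card {w : V // G.Adj v w ∧ deg G w = 2})
    (I : SimpleGraph V)
    (hI : ∀ x y : V, I.Adj x y ↔ G.Adj x y ∧ (deg G x = 2 ∨ deg G y = 2))
    (c : V → Fin k) :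
    IsLocOpt G c ↔ ∀ x y : V, I.Adj x y → c x = c y := by
  classical
  constructor
  · intro hc x y hxy
    rw [hI] at hxy
    rcases hxy.2 with h2 | h2
    · exact (locopt_nbr_eq hc h2 hxy.1).symm
    · exact locopt_nbr_eq hc h2 hxy.1.symm
  · intro hconst v d hd
    rw [card_subtype_filter, card_subtype_filter]
    set Sd := Finset.univ.filter (fun x => G.Adj v x ∧ c x = d) with hSd
    set Sc := Finset.univ.filter (fun x => G.Adj v x ∧ c x = c v) with hSc
    have hdisj : Disjoint Sd Sc := by
      rw [Finset.disjoint_left]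
      intro x hx hx'
      simp only [hSd, hSc, Finset.mem_filter] at hx hx'
      exact hd (hx.2.2 ▸ hx'.2.2)
    have hsub : Sd ∪ Sc ⊆ Finset.univ.filter (fun x => G.Adj v x) := by
      intro x hx
      rcases Finset.mem_union.mp hx with hx | hx <;>
        simp only [hSd, hSc, Finset.mem_filter] at hx <;> simp [hx.2.1]
    have hdeg : (Finset.univ.filter (fun x => G.Adj v x)).card = deg G v := by
      rw [← card_subtype_filter]; rfl
    have hsum : Sd.card + Sc.card ≤ deg G v := by
      rw [← Finset.card_union_of_disjoint hdisj, ← hdeg]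
      exact Finset.card_le_card hsub
    by_cases hv : deg G v = 2
    · -- bivalent vertex: all neighbors share its color
      have hSdempty : Sd = ∅ := by
        rw [Finset.eq_empty_iff_forall_notMem]
        intro x hx
        simp only [hSd, Finset.mem_filter] at hx
        have : c x = c v := by
          refine (hconst v x ?_).symm
          rw [hI]
          exact ⟨hx.2.1, Or.inl hv⟩
        exact hd (hx.2.2 ▸ this)
      have hScfull : Sc.card = 2 := by
        have : Sc = Finset.univ.filter (fun x => G.Adj v x) := by
          apply Finset.Subset.antisymm
          · intro x hx; simp only [hSc, Finset.mem_filter] at hx; simp [hx.2.1]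
          · intro x hx
            simp only [Finset.mem_filter] at hx
            have : c x = c v := by
              refine (hconst v x ?_).symm
              rw [hI]; exact ⟨hx.2, Or.inl hv⟩
            simp [hSc, hx.2, this]
        rw [this, hdeg, hv]
      rw [hSdempty, hScfull]; simp
    · -- non-bivalent vertex: bivalent neighbors give a strict majority
      have hmaj := hdense v hv
      rw [card_subtype_filter] at hmaj
      set B := Finset.univ.filter (fun w => G.Adj v w ∧ deg G w = 2) with hB
      have hBsub : B ⊆ Sc := by
        intro x hx
        simp only [hB, Finset.mem_filter] at hx
        have : c x = c v := by
          refine (hconst v x ?_).symm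
          rw [hI]; exact ⟨hx.2.1, Or.inr hx.2.2⟩
        simp [hSc, hx.2.1, this]
      have := Finset.card_le_card hBsub
      omega

theorem stmt6 {V : Type*} [Fintype V] (G : SimpleGraph V) (k p : ℕ)
    (hdense : ∀ v : V, deg G v ≠ 2 →
      deg G v < 2 * Nat.card {w : V // G.Adj v w ∧ deg G w = 2})
    (I : SimpleGraph V)
    (hI : ∀ x y : V, I.Adj x y ↔ G.Adj x y ∧ (deg G x = 2 ∨ deg G y = 2))
    (hp : Nat.card (SimpleGraph.ConnectedComponent
      (SimpleGraph.induce {v : V | ∃ w, I.Adj v w} I)) = p) :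
    LOcount G k = k ^ p := by
  classical
  -- Step 1: the support of I is all of V
  have hsupp : {v : V | ∃ w, I.Adj v w} = Set.univ := by
    ext v
    simp only [Set.mem_setOf_eq, Set.mem_univ, iff_true]
    by_cases hv : deg G v = 2
    · have : 0 < Nat.card {w : V // G.Adj v w} := by rw [show Nat.card {w : V // G.Adj v w} = deg G v from rfl, hv]; norm_num
      obtain ⟨w, hw⟩ := (Nat.card_pos_iff.mp this).1
      exact ⟨w, (hI v w).mpr ⟨hw, Or.inl hv⟩⟩
    · have h1 := hdense v hv
      have : 0 < Nat.card {w : V // G.Adj v w ∧ deg G w = 2} := by omega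
      obtain ⟨w, hw⟩ := (Nat.card_pos_iff.mp this).1
      exact ⟨w, (hI v w).mpr ⟨hw.1, Or.inr hw.2⟩⟩
  -- Step 2: p = number of connected components of I
  have hp' : Nat.card I.ConnectedComponent = p := by
    rw [← hp]
    refine Nat.card_congr ?_
    rw [hsupp]
    exact (SimpleGraph.induceUnivIso I).symm.connectedComponentEquiv
  -- Step 3: LO colorings correspond to functions on connected components
  have hwalk : ∀ (c : V → Fin k), (∀ x y : V, I.Adj x y → c x = c y) →
      ∀ (v w : V), I.Reachable v w → c v = c w := by
    intro c hc v w hr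
    obtain ⟨pw⟩ := hr
    induction pw with
    | nil => rfl
    | cons h _ ih => exact (hc _ _ h).trans ih
  let E : {c : V → Fin k // ∀ x y : V, I.Adj x y → c x = c y} ≃
      (I.ConnectedComponent → Fin k) :=
    { toFun := fun c => Quot.lift c.1 (fun v w h => hwalk c.1 c.2 v w h)
      invFun := fun f => ⟨f ∘ I.connectedComponentMk, fun x y h => by
        simp only [Function.comp_apply]
        rw [SimpleGraph.ConnectedComponent.connectedComponentMk_eq_of_adj h]⟩
      left_inv := fun c => Subtype.ext rfl
      right_inv := fun f => by
        funext q
        induction q using SimpleGraph.ConnectedComponent.ind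
        rfl }
  have hcount : LOcount G k = Nat.card {c : V → Fin k // ∀ x y : V, I.Adj x y → c x = c y} := by
    unfold LOcount
    apply Nat.card_congr
    exact Equiv.subtypeEquivRight (fun c => locopt_iff G hdense I hI c)
  rw [hcount, Nat.card_congr E, Nat.card_fun, Nat.card_eq_fintype_card (α := Fin k),
    Fintype.card_fin, hp']
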